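/- Let (X, d) be a metric space, let F and S be finite sets of points of X, let u be a positive integer, and let w : F × S → ℤ≥0 satisfy Σ_{s∈S} w(i, s) ≤ u for every i ∈ F and Σ_{i∈F} w(i, s) = t_s for every s ∈ S, where t_s ≤ u. Then there exists w' : F × S → ℤ≥0 such that: Σ_{s∈S} w'(i, s) ≤ u for every i ∈ F; Σ_{i∈F} w'(i, s) = t_s for every s ∈ S; Σ_{i∈F, s∈S} w'(i, s)·d(i, s) ≤ Σ_{i∈F, s∈S} w(i, s)·d(i, s); and the number of i ∈ F with Σ_{s∈S} w'(i, s) > 0 is at most |S|. -/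

import Mathlib

open Finset

namespace Stmt2Aux

variable {X : Type} [DecidableEq X]

/-- two rows are adjacent if they share a column with positive weight -/
def stepR (S : Finset X) (w : X → X → ℕ) (a b : X) : Prop :=
  a ≠ b ∧ ∃ s ∈ S, w a s ≠ 0 ∧ w b s ≠ 0

lemma stepR_symm (S : Finset X) (w : X → X → ℕ) : Symmetric (stepR S w) := by
  rintro a b ⟨hab, s, hs, ha, hb⟩
  exact ⟨hab.symm, s, hs, hb, ha⟩

lemma conn_symm (S : Finset X) (w : X → X → ℕ) {a b : X}
    (h : Relation.ReflTransGen (stepR S w) a b) :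
    Relation.ReflTransGen (stepR S w) b a :=
  by haveI : Std.Symm (stepR S w) := ⟨fun a b h => stepR_symm S w h⟩; exact Std.Symm.symm _ _ h

lemma count (u : ℕ) (hu : 0 < u) :
    ∀ N (M S : Finset X) (w : X → X → ℕ), M.card ≤ N →
      (∀ i ∈ M, ∃ s ∈ S, w i s ≠ 0) →
      (∀ i ∈ M, ∑ s ∈ S, w i s ≤ u) →
      (∀ s ∈ S, ∑ i ∈ M, w i s ≤ u) →
      (∀ i ∈ M, ∀ i' ∈ M, i ≠ i' → (∑ s ∈ S, w i s < u) → (∑ s ∈ S, w i' s < u) →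
        ¬ Relation.ReflTransGen (stepR S w) i i') →
      M.card ≤ S.card := by
  intro N
  induction N with
  | zero =>
    intro M S w hM _ _ _ _
    simpa using Nat.le_zero.mp hM ▸ (Nat.zero_le S.card)
  | succ N ih =>
    intro M S w hM hmatch hrow hcol hstab
    classical
    rcases M.eq_empty_or_nonempty with rfl | ⟨i₀, hi₀⟩
    · simp
    set K := M.filter (fun i => Relation.ReflTransGen (stepR S w) i₀ i) with hK
    have hi₀K : i₀ ∈ K := mem_filter.mpr ⟨hi₀, Relation.ReflTransGen.refl⟩
    have hKM : K ⊆ M := filter_subset _ _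
    set C := S.filter (fun s => ∃ i ∈ K, w i s ≠ 0) with hC
    have hCS : C ⊆ S := filter_subset _ _
    -- mass into C only, from rows of K
    have hAinC : ∀ i ∈ K, ∀ s ∈ S, w i s ≠ 0 → s ∈ C := by
      intro i hiK s hs hw
      exact mem_filter.mpr ⟨hs, ⟨i, hiK, hw⟩⟩
    have hBzero : ∀ i ∈ M, i ∉ K → ∀ s ∈ C, w i s = 0 := by
      intro i hiM hiK s hsC
      by_contra hw
      rcases mem_filter.mp hsC with ⟨hsS, k, hkK, hwk⟩
      rcases mem_filter.mp hkK with ⟨hkM, hconn⟩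
      have hki : k ≠ i := by
        rintro rfl; exact hiK hkK
      have : Relation.ReflTransGen (stepR S w) i₀ i :=
        hconn.tail ⟨hki, s, hsS, hwk, hw⟩
      exact hiK (mem_filter.mpr ⟨hiM, this⟩)
    -- rows of K have all their mass inside C
    have hrowK : ∀ i ∈ K, ∑ s ∈ S, w i s = ∑ s ∈ C, w i s := by
      intro i hiK
      refine (Finset.sum_subset hCS ?_).symm
      intro s hs hsC
      by_contra hw
      exact hsC (hAinC i hiK s hs hw)
    -- upper bound on mass of K
    have hmassK : ∑ i ∈ K, ∑ s ∈ S, w i s ≤ u * C.card := by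
      calc ∑ i ∈ K, ∑ s ∈ S, w i s = ∑ i ∈ K, ∑ s ∈ C, w i s := by
            exact Finset.sum_congr rfl hrowK
        _ = ∑ s ∈ C, ∑ i ∈ K, w i s := Finset.sum_comm
        _ ≤ ∑ s ∈ C, ∑ i ∈ M, w i s := by
            refine Finset.sum_le_sum ?_
            intro s hs
            exact Finset.sum_le_sum_of_subset hKM
        _ ≤ ∑ s ∈ C, u := by
            refine Finset.sum_le_sum ?_
            intro s hs; exact hcol s (hCS hs)
        _ = u * C.card := by rw [Finset.sum_const, smul_eq_mul, mul_comm]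
    -- at most one non-full row in K
    set Kn := K.filter (fun i => ∑ s ∈ S, w i s < u) with hKn
    have hKn1 : Kn.card ≤ 1 := by
      by_contra h
      push_neg at h
      obtain ⟨a, ha, b, hb, hab⟩ := Finset.one_lt_card.mp h
      rcases mem_filter.mp ha with ⟨haK, hanf⟩
      rcases mem_filter.mp hb with ⟨hbK, hbnf⟩
      rcases mem_filter.mp haK with ⟨haM, haconn⟩
      rcases mem_filter.mp hbK with ⟨hbM, hbconn⟩
      exact hstab a haM b hbM hab hanf hbnf ((conn_symm S w haconn).trans hbconn)
    -- lower bound on mass of K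
    have hmassK' : u * (K.card - 1) + 1 ≤ ∑ i ∈ K, ∑ s ∈ S, w i s := by
      have hsplit : ∑ i ∈ K, ∑ s ∈ S, w i s
          = ∑ i ∈ K \ Kn, ∑ s ∈ S, w i s + ∑ i ∈ Kn, ∑ s ∈ S, w i s := by
        rw [Finset.sum_sdiff (filter_subset _ _)]
      have h1 : ∀ i ∈ K \ Kn, u ≤ ∑ s ∈ S, w i s := by
        intro i hi
        rcases Finset.mem_sdiff.mp hi with ⟨hiK, hiKn⟩
        by_contra h
        push_neg at h
        exact hiKn (mem_filter.mpr ⟨hiK, h⟩)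
      have h2 : ∀ i ∈ K, 1 ≤ ∑ s ∈ S, w i s := by
        intro i hiK
        obtain ⟨s, hs, hws⟩ := hmatch i (hKM hiK)
        have : w i s ≤ ∑ s ∈ S, w i s := Finset.single_le_sum (fun _ _ => Nat.zero_le _) hs
        omega
      have hlow1 : u * (K \ Kn).card ≤ ∑ i ∈ K \ Kn, ∑ s ∈ S, w i s := by
        calc u * (K \ Kn).card = ∑ _i ∈ K \ Kn, u := by
              rw [Finset.sum_const, smul_eq_mul, mul_comm]
          _ ≤ _ := Finset.sum_le_sum h1
      have hcardsd : (K \ Kn).card = K.card - Kn.card := card_sdiff_of_subset (filter_subset _ _)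
      have hKpos : 1 ≤ K.card := Finset.card_pos.mpr ⟨i₀, hi₀K⟩
      rcases Finset.eq_empty_or_nonempty Kn with hKne | ⟨x, hx⟩
      · have hKK : K \ Kn = K := by rw [hKne, Finset.sdiff_empty]
        rw [hKK] at hlow1
        have hmul : u * (K.card - 1) + u = u * K.card := by
          rw [← Nat.mul_succ]; congr 1; omega
        calc u * (K.card - 1) + 1 ≤ u * (K.card - 1) + u := by omega
          _ = u * K.card := hmul
          _ ≤ _ := hlow1
      · have hc1 : Kn.card = 1 := le_antisymm hKn1 (Finset.card_pos.mpr ⟨x, hx⟩)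
        have hxsum : 1 ≤ ∑ s ∈ S, w x s := h2 x (filter_subset _ _ hx)
        have hKnsum : 1 ≤ ∑ i ∈ Kn, ∑ s ∈ S, w i s := by
          calc 1 ≤ ∑ s ∈ S, w x s := hxsum
            _ ≤ ∑ i ∈ Kn, ∑ s ∈ S, w i s := by
              exact Finset.single_le_sum (f := fun i => ∑ s ∈ S, w i s) (fun i _ => Nat.zero_le _) hx
        have hcard : (K \ Kn).card = K.card - 1 := by rw [hcardsd, hc1]
        rw [hcard] at hlow1
        calc u * (K.card - 1) + 1 ≤ ∑ i ∈ K \ Kn, ∑ s ∈ S, w i s + ∑ i ∈ Kn, ∑ s ∈ S, w i s :=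
              Nat.add_le_add hlow1 hKnsum
          _ = _ := hsplit.symm
    -- K.card ≤ C.card
    have hKC : K.card ≤ C.card := by
      have h3 : u * (K.card - 1) < u * C.card := by
        have := le_trans hmassK' hmassK
        omega
      have h4 := Nat.lt_of_mul_lt_mul_left h3
      have hKpos : 1 ≤ K.card := Finset.card_pos.mpr ⟨i₀, hi₀K⟩
      omega
    -- recurse on M \ K, S \ C
    have hrec : (M \ K).card ≤ (S \ C).card := by
      refine ih (M \ K) (S \ C) w ?_ ?_ ?_ ?_ ?_
      · have : (M \ K).card = M.card - K.card := card_sdiff_of_subset hKM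
        have hKpos : 1 ≤ K.card := Finset.card_pos.mpr ⟨i₀, hi₀K⟩
        omega
      · intro i hi
        rcases Finset.mem_sdiff.mp hi with ⟨hiM, hiK⟩
        obtain ⟨s, hs, hws⟩ := hmatch i hiM
        refine ⟨s, Finset.mem_sdiff.mpr ⟨hs, ?_⟩, hws⟩
        intro hsC
        exact hws (hBzero i hiM hiK s hsC)
      · intro i hi
        rcases Finset.mem_sdiff.mp hi with ⟨hiM, _⟩
        calc ∑ s ∈ S \ C, w i s ≤ ∑ s ∈ S, w i s :=
              Finset.sum_le_sum_of_subset (Finset.sdiff_subset)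
          _ ≤ u := hrow i hiM
      · intro s hs
        rcases Finset.mem_sdiff.mp hs with ⟨hsS, _⟩
        calc ∑ i ∈ M \ K, w i s ≤ ∑ i ∈ M, w i s :=
              Finset.sum_le_sum_of_subset (Finset.sdiff_subset)
          _ ≤ u := hcol s hsS
      · intro i hi i' hi' hne hnf hnf' hconn
        rcases Finset.mem_sdiff.mp hi with ⟨hiM, hiK⟩
        rcases Finset.mem_sdiff.mp hi' with ⟨hi'M, hi'K⟩
        have hfull : ∀ j ∈ M \ K, ∑ s ∈ S, w j s = ∑ s ∈ S \ C, w j s := by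
          intro j hj
          rcases Finset.mem_sdiff.mp hj with ⟨hjM, hjK⟩
          refine (Finset.sum_subset (Finset.sdiff_subset) ?_).symm
          intro s hsS hsSC
          have hsC : s ∈ C := by
            by_contra hsC
            exact hsSC (Finset.mem_sdiff.mpr ⟨hsS, hsC⟩)
          exact hBzero j hjM hjK s hsC
        have hconn' : Relation.ReflTransGen (stepR S w) i i' := by
          refine Relation.ReflTransGen.mono ?_ _ _ hconn
          rintro a b ⟨hab, s, hsSC, ha, hb⟩
          exact ⟨hab, s, (Finset.mem_sdiff.mp hsSC).1, ha, hb⟩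
        refine hstab i hiM i' hi'M hne ?_ ?_ hconn'
        · rw [hfull i (Finset.mem_sdiff.mpr ⟨hiM, hiK⟩)]; exact hnf
        · rw [hfull i' (Finset.mem_sdiff.mpr ⟨hi'M, hi'K⟩)]; exact hnf'
    have h4 : (M \ K).card + K.card = M.card := Finset.card_sdiff_add_card_eq_card hKM
    have h5 : (S \ C).card + C.card = S.card := Finset.card_sdiff_add_card_eq_card hCS
    omega

lemma exists_path (S : Finset X) (w : X → X → ℕ) {i i' : X}
    (hne : i ≠ i') (hconn : Relation.ReflTransGen (stepR S w) i i') :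
    ∃ (N : ℕ) (ρ σ : ℕ → X), 0 < N ∧ ρ 0 = i ∧ ρ N = i' ∧
      (∀ a, a ≤ N → ∀ b, b ≤ N → ρ a = ρ b → a = b) ∧
      (∀ a, a < N → ∀ b, b < N → σ a = σ b → a = b) ∧
      (∀ j, j < N → σ j ∈ S ∧ w (ρ j) (σ j) ≠ 0 ∧ w (ρ (j+1)) (σ j) ≠ 0) := by
  classical
  have hex : ∀ {b : X}, Relation.ReflTransGen (stepR S w) i b →
      ∃ n, ∃ ρ : ℕ → X, ρ 0 = i ∧ ρ n = b ∧ ∀ j, j < n → stepR S w (ρ j) (ρ (j+1)) := by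
    intro b h
    induction h with
    | refl => exact ⟨0, fun _ => i, rfl, rfl, fun j hj => absurd hj (by omega)⟩
    | @tail b c hab hbc ih =>
      obtain ⟨n, ρ, h0, hn, hch⟩ := ih
      refine ⟨n + 1, fun j => if j ≤ n then ρ j else c, by simp [h0], by simp, ?_⟩
      intro j hj
      rcases Nat.lt_or_ge j n with hjn | hjn
      · simpa [Nat.le_of_lt hjn, Nat.succ_le_of_lt hjn] using hch j hjn
      · have hje : j = n := by omega
        subst hje
        simpa [hn] using hbc
  obtain ⟨N, hPN, hmin⟩ : ∃ n, (∃ ρ : ℕ → X, ρ 0 = i ∧ ρ n = i' ∧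
        ∀ j, j < n → stepR S w (ρ j) (ρ (j+1))) ∧ ∀ m, m < n →
      ¬ (∃ ρ : ℕ → X, ρ 0 = i ∧ ρ m = i' ∧ ∀ j, j < m → stepR S w (ρ j) (ρ (j+1))) := by
    have hP := hex hconn
    exact ⟨Nat.find hP, Nat.find_spec hP, fun m hm => Nat.find_min hP hm⟩
  obtain ⟨ρ, h0, hN, hch⟩ := hPN
  have hNpos : 0 < N := by
    rcases Nat.eq_zero_or_pos N with h | h
    · exfalso; apply hne; rw [← h0, ← hN, h]
    · exact h
  -- general shortcut principle
  have shortcut : ∀ a b, a < b → b ≤ N →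
      (b < N → stepR S w (ρ a) (ρ (b + 1))) → (b = N → ρ a = i') → False := by
    intro a b hab hbN hstep hend
    apply hmin (N - (b - a)) (by omega)
    set ρ' : ℕ → X := fun j => if j ≤ a then ρ j else ρ (j + (b - a)) with hρ'
    have hv1 : ∀ j, j ≤ a → ρ' j = ρ j := by
      intro j hj; rw [hρ']; exact if_pos hj
    have hv2 : ∀ j, ¬ (j ≤ a) → ρ' j = ρ (j + (b - a)) := by
      intro j hj; rw [hρ']; exact if_neg hj
    refine ⟨ρ', by rw [hv1 0 (by omega)]; exact h0, ?_, ?_⟩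
    · rcases Nat.lt_or_ge a (N - (b - a)) with h | h
      · rw [hv2 (N - (b - a)) (by omega)]
        have he : N - (b - a) + (b - a) = N := by omega
        rw [he, hN]
      · have hbN' : b = N := by omega
        have he : N - (b - a) = a := by omega
        rw [he, hv1 a (le_refl a)]
        exact hend hbN'
    · intro j hj
      rcases Nat.lt_or_ge j a with hja | hja
      · rw [hv1 j (by omega), hv1 (j+1) (by omega)]
        exact hch j (by omega)
      rcases Nat.eq_or_lt_of_le hja with hje | hja'
      · rw [hv1 j (by omega), hv2 (j+1) (by omega)]
        have e2 : j + 1 + (b - a) = b + 1 := by omega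
        rw [e2, ← hje]
        exact hstep (by omega)
      · rw [hv2 j (by omega), hv2 (j+1) (by omega)]
        have e2 : j + 1 + (b - a) = j + (b - a) + 1 := by omega
        rw [e2]
        exact hch (j + (b - a)) (by omega)
  -- row injectivity
  have hrinj : ∀ a, a ≤ N → ∀ b, b ≤ N → ρ a = ρ b → a = b := by
    have hinj : ∀ a b, a < b → b ≤ N → ρ a ≠ ρ b := by
      intro a b hab hbN heq
      refine shortcut a b hab hbN ?_ ?_
      · intro hbltN
        rw [heq]
        exact hch b hbltN
      · intro hbeq
        rw [heq, hbeq, hN]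
    intro a ha b hb heq
    rcases lt_trichotomy a b with h | h | h
    · exact absurd heq (hinj a b h hb)
    · exact h
    · exact absurd heq.symm (hinj b a h ha)
  -- columns
  have hch' : ∀ j, ∃ s, j < N → (s ∈ S ∧ w (ρ j) s ≠ 0 ∧ w (ρ (j+1)) s ≠ 0) := by
    intro j
    by_cases h : j < N
    · obtain ⟨hne', s, hs, h1, h2⟩ := hch j h
      exact ⟨s, fun _ => ⟨hs, h1, h2⟩⟩
    · exact ⟨i, fun hc => absurd hc h⟩
  choose σ hσ using hch'
  refine ⟨N, ρ, σ, hNpos, h0, hN, hrinj, ?_, hσ⟩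
  -- column injectivity
  have hcinj : ∀ a b, a < b → b < N → σ a ≠ σ b := by
    intro a b hab hbN heq
    refine shortcut a b hab (le_of_lt hbN) ?_ ?_
    · intro _
      have haN : a < N := by omega
      refine ⟨?_, σ a, (hσ a haN).1, (hσ a haN).2.1, ?_⟩
      · intro hcontra
        have := hrinj a (by omega) (b+1) (by omega) hcontra
        omega
      · rw [heq]
        exact (hσ b hbN).2.2
    · intro hbeq
      omega
  intro a ha b hb heq
  rcases lt_trichotomy a b with h | h | h
  · exact absurd heq (hcinj a b h hb)
  · exact h
  · exact absurd heq.symm (hcinj b a h ha)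

lemma move [PseudoMetricSpace X] (F S : Finset X) (u : ℕ) (w : X → X → ℕ)
    (hnorm : ∀ i s, w i s ≠ 0 → i ∈ F ∧ s ∈ S)
    (hrow : ∀ i ∈ F, ∑ s ∈ S, w i s ≤ u)
    (N : ℕ) (ρ σ : ℕ → X) (hNpos : 0 < N)
    (hrinj : ∀ a, a ≤ N → ∀ b, b ≤ N → ρ a = ρ b → a = b)
    (hcinj : ∀ a, a < N → ∀ b, b < N → σ a = σ b → a = b)
    (hedge : ∀ j, j < N → σ j ∈ S ∧ w (ρ j) (σ j) ≠ 0 ∧ w (ρ (j+1)) (σ j) ≠ 0)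
    (hnf0 : ∑ s ∈ S, w (ρ 0) s < u) (hnfN : ∑ s ∈ S, w (ρ N) s < u)
    (hcost : ∑ j ∈ Finset.range N, dist (ρ (j+1)) (σ j)
      ≤ ∑ j ∈ Finset.range N, dist (ρ j) (σ j)) :
    ∃ w₁ : X → X → ℕ,
      (∀ i s, w₁ i s ≠ 0 → w i s ≠ 0) ∧
      (∀ i ∈ F, ∑ s ∈ S, w₁ i s ≤ u) ∧
      (∀ s ∈ S, ∑ i ∈ F, w₁ i s = ∑ i ∈ F, w i s) ∧
      (∑ i ∈ F, ∑ s ∈ S, (w₁ i s : ℝ) * dist i s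
        ≤ ∑ i ∈ F, ∑ s ∈ S, (w i s : ℝ) * dist i s) ∧
      ((F ×ˢ S).filter (fun p => w₁ p.1 p.2 ≠ 0)).card
        + (F.filter (fun i => 0 < ∑ s ∈ S, w₁ i s ∧ ∑ s ∈ S, w₁ i s < u)).card
      < ((F ×ˢ S).filter (fun p => w p.1 p.2 ≠ 0)).card
        + (F.filter (fun i => 0 < ∑ s ∈ S, w i s ∧ ∑ s ∈ S, w i s < u)).card := by
  classical
  have hσS : ∀ j, j < N → σ j ∈ S := fun j hj => (hedge j hj).1
  have hρF : ∀ j, j ≤ N → ρ j ∈ F := by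
    intro j hj
    rcases Nat.lt_or_ge j N with h | h
    · exact (hnorm _ _ (hedge j h).2.1).1
    · have hjN : j = N := by omega
      have hN1 : N - 1 < N := by omega
      have he : N - 1 + 1 = N := by omega
      have h2 := (hedge (N-1) hN1).2.2
      rw [he] at h2
      rw [hjN]
      exact (hnorm _ _ h2).1
  -- minimal edge value
  obtain ⟨jm, hjm, hjmmin⟩ := Finset.exists_min_image (Finset.range N)
    (fun j => w (ρ j) (σ j)) ⟨0, Finset.mem_range.mpr hNpos⟩
  have hjmN : jm < N := Finset.mem_range.mp hjm
  set A := w (ρ jm) (σ jm) with hA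
  set B := u - ∑ s ∈ S, w (ρ N) s with hB
  set δ := min A B with hδ
  have hApos : 1 ≤ A := Nat.one_le_iff_ne_zero.mpr (hedge jm hjmN).2.1
  have hBpos : 1 ≤ B := by omega
  have hδpos : 1 ≤ δ := le_min hApos hBpos
  have hδA : ∀ j, j < N → δ ≤ w (ρ j) (σ j) := by
    intro j hj
    exact le_trans (min_le_left _ _) (hjmmin j (Finset.mem_range.mpr hj))
  have hδB : δ ≤ B := min_le_right _ _
  -- plus and minus counts
  set pc : X → X → ℕ := fun i s =>
    ((Finset.range N).filter (fun j => ρ (j+1) = i ∧ σ j = s)).card with hpc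
  set mc : X → X → ℕ := fun i s =>
    ((Finset.range N).filter (fun j => ρ j = i ∧ σ j = s)).card with hmc
  have hpc1 : ∀ i s, pc i s ≤ 1 := by
    intro i s
    refine Finset.card_le_one.mpr ?_
    intro a ha b hb
    rcases Finset.mem_filter.mp ha with ⟨haR, ha1, ha2⟩
    rcases Finset.mem_filter.mp hb with ⟨hbR, hb1, hb2⟩
    exact hcinj a (Finset.mem_range.mp haR) b (Finset.mem_range.mp hbR) (ha2.trans hb2.symm)
  have hmc1 : ∀ i s, mc i s ≤ 1 := by
    intro i s
    refine Finset.card_le_one.mpr ?_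
    intro a ha b hb
    rcases Finset.mem_filter.mp ha with ⟨haR, ha1, ha2⟩
    rcases Finset.mem_filter.mp hb with ⟨hbR, hb1, hb2⟩
    exact hcinj a (Finset.mem_range.mp haR) b (Finset.mem_range.mp hbR) (ha2.trans hb2.symm)
  have hmcW : ∀ i s, mc i s ≠ 0 → ∃ j, j < N ∧ ρ j = i ∧ σ j = s := by
    intro i s h
    obtain ⟨j, hj⟩ := Finset.card_ne_zero.mp h
    rcases Finset.mem_filter.mp hj with ⟨hjR, h1, h2⟩
    exact ⟨j, Finset.mem_range.mp hjR, h1, h2⟩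
  have hpcW : ∀ i s, pc i s ≠ 0 → ∃ j, j < N ∧ ρ (j+1) = i ∧ σ j = s := by
    intro i s h
    obtain ⟨j, hj⟩ := Finset.card_ne_zero.mp h
    rcases Finset.mem_filter.mp hj with ⟨hjR, h1, h2⟩
    exact ⟨j, Finset.mem_range.mp hjR, h1, h2⟩
  have hdisj : ∀ i s, mc i s ≠ 0 → pc i s = 0 := by
    intro i s hm
    by_contra hp
    obtain ⟨j, hjN', hj1, hj2⟩ := hmcW i s hm
    obtain ⟨k, hkN', hk1, hk2⟩ := hpcW i s hp
    have hjk : j = k := hcinj j hjN' k hkN' (hj2.trans hk2.symm)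
    rw [hjk] at hj1
    have : k + 1 = k := hrinj (k+1) (by omega) k (by omega) (hk1.trans hj1.symm)
    omega
  have hmcle : ∀ i s, δ * mc i s ≤ w i s := by
    intro i s
    rcases Nat.eq_zero_or_pos (mc i s) with h | h
    · simp [h]
    · obtain ⟨j, hjN', hj1, hj2⟩ := hmcW i s (by omega)
      have h1 : mc i s = 1 := le_antisymm (hmc1 i s) h
      rw [h1, mul_one, ← hj1, ← hj2]
      exact hδA j hjN'
  set w₁ : X → X → ℕ := fun i s => w i s + δ * pc i s - δ * mc i s with hw₁
  have L4 : ∀ i s, w₁ i s + δ * mc i s = w i s + δ * pc i s := by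
    intro i s
    have h1 := hmcle i s
    have h2 : w₁ i s = w i s + δ * pc i s - δ * mc i s := rfl
    omega
  -- support inclusion
  have hsupp : ∀ i s, w₁ i s ≠ 0 → w i s ≠ 0 := by
    intro i s h1 h0
    have hmc0 : mc i s = 0 := by
      have := hmcle i s
      rcases Nat.eq_zero_or_pos (mc i s) with h | h
      · exact h
      · have h1' : mc i s = 1 := le_antisymm (hmc1 i s) h
        rw [h1', mul_one, h0] at this
        omega
    have hpc0 : pc i s = 0 := by
      by_contra hp
      obtain ⟨j, hjN', hj1, hj2⟩ := hpcW i s hp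
      apply (hedge j hjN').2.2
      rw [hj1, hj2]
      exact h0
    have := L4 i s
    rw [hmc0, hpc0, h0] at this
    simp at this
    exact h1 this
  -- row count sums
  set prow : X → ℕ := fun i => ((Finset.range N).filter (fun j => ρ (j+1) = i)).card with hprow
  set mrow : X → ℕ := fun i => ((Finset.range N).filter (fun j => ρ j = i)).card with hmrow
  have hprowsum : ∀ i, ∑ s ∈ S, pc i s = prow i := by
    intro i
    calc ∑ s ∈ S, pc i s
        = ∑ s ∈ S, ∑ j ∈ Finset.range N, (if ρ (j+1) = i ∧ σ j = s then 1 else 0) := by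
          refine Finset.sum_congr rfl fun s _ => ?_
          exact Finset.card_filter _ _
      _ = ∑ j ∈ Finset.range N, ∑ s ∈ S, (if ρ (j+1) = i ∧ σ j = s then 1 else 0) :=
          Finset.sum_comm
      _ = ∑ j ∈ Finset.range N, (if ρ (j+1) = i then 1 else 0) := by
          refine Finset.sum_congr rfl fun j hj => ?_
          by_cases h : ρ (j+1) = i
          · simp only [h, true_and]
            rw [Finset.sum_ite_eq]
            simp [hσS j (Finset.mem_range.mp hj)]
          · simp [h]
      _ = prow i := (Finset.card_filter _ _).symm
  have hmrowsum : ∀ i, ∑ s ∈ S, mc i s = mrow i := by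
    intro i
    calc ∑ s ∈ S, mc i s
        = ∑ s ∈ S, ∑ j ∈ Finset.range N, (if ρ j = i ∧ σ j = s then 1 else 0) := by
          refine Finset.sum_congr rfl fun s _ => ?_
          exact Finset.card_filter _ _
      _ = ∑ j ∈ Finset.range N, ∑ s ∈ S, (if ρ j = i ∧ σ j = s then 1 else 0) :=
          Finset.sum_comm
      _ = ∑ j ∈ Finset.range N, (if ρ j = i then 1 else 0) := by
          refine Finset.sum_congr rfl fun j hj => ?_
          by_cases h : ρ j = i
          · simp only [h, true_and]
            rw [Finset.sum_ite_eq]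
            simp [hσS j (Finset.mem_range.mp hj)]
          · simp [h]
      _ = mrow i := (Finset.card_filter _ _).symm
  have R4 : ∀ i, ∑ s ∈ S, w₁ i s + δ * mrow i = ∑ s ∈ S, w i s + δ * prow i := by
    intro i
    calc ∑ s ∈ S, w₁ i s + δ * mrow i
        = ∑ s ∈ S, w₁ i s + δ * ∑ s ∈ S, mc i s := by rw [hmrowsum]
      _ = ∑ s ∈ S, (w₁ i s + δ * mc i s) := by
          rw [Finset.mul_sum, Finset.sum_add_distrib]
      _ = ∑ s ∈ S, (w i s + δ * pc i s) := Finset.sum_congr rfl fun s _ => L4 i s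
      _ = ∑ s ∈ S, w i s + δ * ∑ s ∈ S, pc i s := by
          rw [Finset.mul_sum, Finset.sum_add_distrib]
      _ = ∑ s ∈ S, w i s + δ * prow i := by rw [hprowsum]
  have hprow1 : ∀ i, prow i ≤ 1 := by
    intro i
    refine Finset.card_le_one.mpr ?_
    intro a ha b hb
    rcases Finset.mem_filter.mp ha with ⟨haR, ha1⟩
    rcases Finset.mem_filter.mp hb with ⟨hbR, hb1⟩
    have := hrinj (a+1) (Finset.mem_range.mp haR) (b+1) (Finset.mem_range.mp hbR)
      (ha1.trans hb1.symm)
    omega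
  have hmrow1 : ∀ i, mrow i ≤ 1 := by
    intro i
    refine Finset.card_le_one.mpr ?_
    intro a ha b hb
    rcases Finset.mem_filter.mp ha with ⟨haR, ha1⟩
    rcases Finset.mem_filter.mp hb with ⟨hbR, hb1⟩
    exact hrinj a (le_of_lt (Finset.mem_range.mp haR)) b (le_of_lt (Finset.mem_range.mp hbR))
      (ha1.trans hb1.symm)
  have hprowN : prow (ρ N) = 1 := by
    have : (Finset.range N).filter (fun j => ρ (j+1) = ρ N) = {N-1} := by
      ext j
      simp only [Finset.mem_filter, Finset.mem_range, Finset.mem_singleton]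
      constructor
      · rintro ⟨hj, he⟩
        have := hrinj (j+1) (by omega) N (le_refl N) he
        omega
      · rintro rfl
        have he : N - 1 + 1 = N := by omega
        rw [he]
        exact ⟨by omega, rfl⟩
    rw [hprow]
    simp only
    rw [this, Finset.card_singleton]
  have hmrowN : mrow (ρ N) = 0 := by
    rw [hmrow]
    simp only
    rw [Finset.card_eq_zero]
    ext j
    simp only [Finset.mem_filter, Finset.mem_range, Finset.notMem_empty, iff_false, not_and]
    intro hj he
    have := hrinj j (by omega) N (le_refl N) he
    omega
  have hmrow0 : mrow (ρ 0) = 1 := by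
    have : (Finset.range N).filter (fun j => ρ j = ρ 0) = {0} := by
      ext j
      simp only [Finset.mem_filter, Finset.mem_range, Finset.mem_singleton]
      constructor
      · rintro ⟨hj, he⟩
        exact hrinj j (by omega) 0 (by omega) he
      · rintro rfl
        exact ⟨hNpos, rfl⟩
    rw [hmrow]
    simp only
    rw [this, Finset.card_singleton]
  have hprow0 : prow (ρ 0) = 0 := by
    rw [hprow]
    simp only
    rw [Finset.card_eq_zero]
    ext j
    simp only [Finset.mem_filter, Finset.mem_range, Finset.notMem_empty, iff_false, not_and]
    intro hj he
    have := hrinj (j+1) (by omega) 0 (by omega) he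
    omega
  have hρ0N : ρ 0 ≠ ρ N := by
    intro h
    have := hrinj 0 (by omega) N (le_refl N) h
    omega
  -- row sum facts
  have hrsN : ∑ s ∈ S, w₁ (ρ N) s = ∑ s ∈ S, w (ρ N) s + δ := by
    have := R4 (ρ N)
    rw [hprowN, hmrowN] at this
    omega
  have hrs0 : ∑ s ∈ S, w₁ (ρ 0) s + δ = ∑ s ∈ S, w (ρ 0) s := by
    have := R4 (ρ 0)
    rw [hprow0, hmrow0] at this
    omega
  have hprowW : ∀ i, prow i ≠ 0 → ∃ j, j < N ∧ ρ (j+1) = i := by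
    intro i h
    obtain ⟨j, hj⟩ := Finset.card_ne_zero.mp h
    rcases Finset.mem_filter.mp hj with ⟨hjR, hj1⟩
    exact ⟨j, Finset.mem_range.mp hjR, hj1⟩
  have hmrowW : ∀ i, mrow i ≠ 0 → ∃ k, k < N ∧ ρ k = i := by
    intro i h
    obtain ⟨k, hk⟩ := Finset.card_ne_zero.mp h
    rcases Finset.mem_filter.mp hk with ⟨hkR, hk1⟩
    exact ⟨k, Finset.mem_range.mp hkR, hk1⟩
  have hprowpos : ∀ i, (∃ j, j < N ∧ ρ (j+1) = i) → 1 ≤ prow i := by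
    rintro i ⟨j, hj, hj1⟩
    exact Finset.card_pos.mpr ⟨j, Finset.mem_filter.mpr ⟨Finset.mem_range.mpr hj, hj1⟩⟩
  have hmrowpos : ∀ i, (∃ k, k < N ∧ ρ k = i) → 1 ≤ mrow i := by
    rintro i ⟨k, hk, hk1⟩
    exact Finset.card_pos.mpr ⟨k, Finset.mem_filter.mpr ⟨Finset.mem_range.mpr hk, hk1⟩⟩
  have hrsle : ∀ i, i ≠ ρ N → ∑ s ∈ S, w₁ i s ≤ ∑ s ∈ S, w i s := by
    intro i hiN
    have h4 := R4 i
    rcases Nat.eq_zero_or_pos (prow i) with h | h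
    · rw [h] at h4
      omega
    · obtain ⟨j, hjN', hj1⟩ := hprowW i (by omega)
      have hj1N : j + 1 < N := by
        rcases Nat.lt_or_ge (j+1) N with h' | h'
        · exact h'
        · exfalso
          have he : j + 1 = N := by omega
          rw [he] at hj1
          exact hiN hj1.symm
      have hm : 1 ≤ mrow i := hmrowpos i ⟨j+1, hj1N, hj1⟩
      have hp1 : prow i ≤ 1 := hprow1 i
      have hmono : δ * prow i ≤ δ * mrow i := mul_le_mul_right (by omega) δ
      omega
  have hrseq : ∀ i, i ≠ ρ 0 → i ≠ ρ N → ∑ s ∈ S, w₁ i s = ∑ s ∈ S, w i s := by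
    intro i hi0 hiN
    have h4 := R4 i
    have hiff : prow i = mrow i := by
      rcases Nat.eq_zero_or_pos (prow i) with hp | hp
      · rcases Nat.eq_zero_or_pos (mrow i) with hm | hm
        · rw [hp, hm]
        · exfalso
          obtain ⟨k, hkN', hk1⟩ := hmrowW i (by omega)
          have hk0 : k ≠ 0 := by
            rintro rfl
            exact hi0 hk1.symm
          have he : k - 1 + 1 = k := by omega
          have : 1 ≤ prow i := hprowpos i ⟨k - 1, by omega, by rw [he]; exact hk1⟩
          omega
      · rcases Nat.eq_zero_or_pos (mrow i) with hm | hm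
        · exfalso
          obtain ⟨j, hjN', hj1⟩ := hprowW i (by omega)
          have hj1N : j + 1 < N := by
            rcases Nat.lt_or_ge (j+1) N with h' | h'
            · exact h'
            · exfalso
              have he : j + 1 = N := by omega
              rw [he] at hj1
              exact hiN hj1.symm
          have : 1 ≤ mrow i := hmrowpos i ⟨j+1, hj1N, hj1⟩
          omega
        · have := hprow1 i
          have := hmrow1 i
          omega
    rw [hiff] at h4
    omega
  -- row constraint for w₁
  have hrow₁ : ∀ i ∈ F, ∑ s ∈ S, w₁ i s ≤ u := by
    intro i hiF
    by_cases hiN : i = ρ N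
    · subst hiN
      rw [hrsN]
      have := hrow (ρ N) (hρF N (le_refl N))
      omega
    · exact le_trans (hrsle i hiN) (hrow i hiF)
  -- column counts
  have hccol : ∀ s, ∑ i ∈ F, pc i s = ∑ i ∈ F, mc i s := by
    intro s
    have h1 : ∑ i ∈ F, pc i s
        = ((Finset.range N).filter (fun j => σ j = s)).card := by
      calc ∑ i ∈ F, pc i s
          = ∑ i ∈ F, ∑ j ∈ Finset.range N, (if ρ (j+1) = i ∧ σ j = s then 1 else 0) := by
            refine Finset.sum_congr rfl fun i _ => ?_
            exact Finset.card_filter _ _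
        _ = ∑ j ∈ Finset.range N, ∑ i ∈ F, (if ρ (j+1) = i ∧ σ j = s then 1 else 0) :=
            Finset.sum_comm
        _ = ∑ j ∈ Finset.range N, (if σ j = s then 1 else 0) := by
            refine Finset.sum_congr rfl fun j hj => ?_
            by_cases h : σ j = s
            · simp only [h, and_true]
              rw [Finset.sum_ite_eq]
              simp [hρF (j+1) (Finset.mem_range.mp hj)]
            · simp [h]
        _ = _ := (Finset.card_filter _ _).symm
    have h2 : ∑ i ∈ F, mc i s
        = ((Finset.range N).filter (fun j => σ j = s)).card := by
      calc ∑ i ∈ F, mc i s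
          = ∑ i ∈ F, ∑ j ∈ Finset.range N, (if ρ j = i ∧ σ j = s then 1 else 0) := by
            refine Finset.sum_congr rfl fun i _ => ?_
            exact Finset.card_filter _ _
        _ = ∑ j ∈ Finset.range N, ∑ i ∈ F, (if ρ j = i ∧ σ j = s then 1 else 0) :=
            Finset.sum_comm
        _ = ∑ j ∈ Finset.range N, (if σ j = s then 1 else 0) := by
            refine Finset.sum_congr rfl fun j hj => ?_
            by_cases h : σ j = s
            · simp only [h, and_true]
              rw [Finset.sum_ite_eq]
              simp [hρF j (le_of_lt (Finset.mem_range.mp hj))]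
            · simp [h]
        _ = _ := (Finset.card_filter _ _).symm
    rw [h1, h2]
  have hcol₁ : ∀ s ∈ S, ∑ i ∈ F, w₁ i s = ∑ i ∈ F, w i s := by
    intro s _
    have h4 : ∑ i ∈ F, w₁ i s + δ * ∑ i ∈ F, mc i s
        = ∑ i ∈ F, w i s + δ * ∑ i ∈ F, pc i s := by
      calc ∑ i ∈ F, w₁ i s + δ * ∑ i ∈ F, mc i s
          = ∑ i ∈ F, (w₁ i s + δ * mc i s) := by
            rw [Finset.mul_sum, Finset.sum_add_distrib]
        _ = ∑ i ∈ F, (w i s + δ * pc i s) := Finset.sum_congr rfl fun i _ => L4 i s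
        _ = ∑ i ∈ F, w i s + δ * ∑ i ∈ F, pc i s := by
            rw [Finset.mul_sum, Finset.sum_add_distrib]
    rw [hccol s] at h4
    omega
  -- cost
  have hpccost : ∑ i ∈ F, ∑ s ∈ S, (pc i s : ℝ) * dist i s
      = ∑ j ∈ Finset.range N, dist (ρ (j+1)) (σ j) := by
    have h1 : ∀ i s, (pc i s : ℝ) * dist i s
        = ∑ j ∈ Finset.range N, (if ρ (j+1) = i ∧ σ j = s then dist i s else 0) := by
      intro i s
      have hc : pc i s = ∑ j ∈ Finset.range N, (if ρ (j+1) = i ∧ σ j = s then 1 else 0) :=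
        Finset.card_filter _ _
      rw [hc]
      push_cast
      rw [Finset.sum_mul]
      refine Finset.sum_congr rfl fun j _ => ?_
      by_cases h : ρ (j+1) = i ∧ σ j = s
      · simp [h]
      · simp [h]
    calc ∑ i ∈ F, ∑ s ∈ S, (pc i s : ℝ) * dist i s
        = ∑ i ∈ F, ∑ s ∈ S, ∑ j ∈ Finset.range N,
            (if ρ (j+1) = i ∧ σ j = s then dist i s else 0) := by
          refine Finset.sum_congr rfl fun i _ => Finset.sum_congr rfl fun s _ => h1 i s
      _ = ∑ i ∈ F, ∑ j ∈ Finset.range N, ∑ s ∈ S,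
            (if ρ (j+1) = i ∧ σ j = s then dist i s else 0) := by
          refine Finset.sum_congr rfl fun i _ => Finset.sum_comm
      _ = ∑ j ∈ Finset.range N, ∑ i ∈ F, ∑ s ∈ S,
            (if ρ (j+1) = i ∧ σ j = s then dist i s else 0) := Finset.sum_comm
      _ = ∑ j ∈ Finset.range N, dist (ρ (j+1)) (σ j) := by
          refine Finset.sum_congr rfl fun j hj => ?_
          have hin : ∀ i, ∑ s ∈ S, (if ρ (j+1) = i ∧ σ j = s then dist i s else 0)
              = if ρ (j+1) = i then dist i (σ j) else 0 := by
            intro i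
            by_cases h : ρ (j+1) = i
            · simp only [h, true_and]
              rw [Finset.sum_ite_eq]
              simp [hσS j (Finset.mem_range.mp hj)]
            · simp [h]
          rw [Finset.sum_congr rfl fun i _ => hin i]
          rw [Finset.sum_ite_eq]
          simp [hρF (j+1) (Finset.mem_range.mp hj)]
  have hmccost : ∑ i ∈ F, ∑ s ∈ S, (mc i s : ℝ) * dist i s
      = ∑ j ∈ Finset.range N, dist (ρ j) (σ j) := by
    have h1 : ∀ i s, (mc i s : ℝ) * dist i s
        = ∑ j ∈ Finset.range N, (if ρ j = i ∧ σ j = s then dist i s else 0) := by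
      intro i s
      have hc : mc i s = ∑ j ∈ Finset.range N, (if ρ j = i ∧ σ j = s then 1 else 0) :=
        Finset.card_filter _ _
      rw [hc]
      push_cast
      rw [Finset.sum_mul]
      refine Finset.sum_congr rfl fun j _ => ?_
      by_cases h : ρ j = i ∧ σ j = s
      · simp [h]
      · simp [h]
    calc ∑ i ∈ F, ∑ s ∈ S, (mc i s : ℝ) * dist i s
        = ∑ i ∈ F, ∑ s ∈ S, ∑ j ∈ Finset.range N,
            (if ρ j = i ∧ σ j = s then dist i s else 0) := by
          refine Finset.sum_congr rfl fun i _ => Finset.sum_congr rfl fun s _ => h1 i s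
      _ = ∑ i ∈ F, ∑ j ∈ Finset.range N, ∑ s ∈ S,
            (if ρ j = i ∧ σ j = s then dist i s else 0) := by
          refine Finset.sum_congr rfl fun i _ => Finset.sum_comm
      _ = ∑ j ∈ Finset.range N, ∑ i ∈ F, ∑ s ∈ S,
            (if ρ j = i ∧ σ j = s then dist i s else 0) := Finset.sum_comm
      _ = ∑ j ∈ Finset.range N, dist (ρ j) (σ j) := by
          refine Finset.sum_congr rfl fun j hj => ?_
          have hin : ∀ i, ∑ s ∈ S, (if ρ j = i ∧ σ j = s then dist i s else 0)
              = if ρ j = i then dist i (σ j) else 0 := by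
            intro i
            by_cases h : ρ j = i
            · simp only [h, true_and]
              rw [Finset.sum_ite_eq]
              simp [hσS j (Finset.mem_range.mp hj)]
            · simp [h]
          rw [Finset.sum_congr rfl fun i _ => hin i]
          rw [Finset.sum_ite_eq]
          simp [hρF j (le_of_lt (Finset.mem_range.mp hj))]
  have hcost₁ : ∑ i ∈ F, ∑ s ∈ S, (w₁ i s : ℝ) * dist i s
      ≤ ∑ i ∈ F, ∑ s ∈ S, (w i s : ℝ) * dist i s := by
    have hpt : ∀ i s, (w₁ i s : ℝ) * dist i s + (δ : ℝ) * ((mc i s : ℝ) * dist i s)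
        = (w i s : ℝ) * dist i s + (δ : ℝ) * ((pc i s : ℝ) * dist i s) := by
      intro i s
      have h4 := L4 i s
      have h4' : ((w₁ i s + δ * mc i s : ℕ) : ℝ) = ((w i s + δ * pc i s : ℕ) : ℝ) := by
        exact_mod_cast congrArg (Nat.cast : ℕ → ℝ) h4
      push_cast at h4'
      linear_combination (dist i s) * h4'
    have hsum : ∑ i ∈ F, ∑ s ∈ S, (w₁ i s : ℝ) * dist i s
        + (δ : ℝ) * ∑ j ∈ Finset.range N, dist (ρ j) (σ j)
        = ∑ i ∈ F, ∑ s ∈ S, (w i s : ℝ) * dist i s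
        + (δ : ℝ) * ∑ j ∈ Finset.range N, dist (ρ (j+1)) (σ j) := by
      rw [← hmccost, ← hpccost]
      rw [Finset.mul_sum, Finset.mul_sum]
      rw [← Finset.sum_add_distrib, ← Finset.sum_add_distrib]
      refine Finset.sum_congr rfl fun i _ => ?_
      rw [Finset.mul_sum, Finset.mul_sum]
      rw [← Finset.sum_add_distrib, ← Finset.sum_add_distrib]
      exact Finset.sum_congr rfl fun s _ => hpt i s
    have hδnn : (0 : ℝ) ≤ (δ : ℝ) := Nat.cast_nonneg δ
    nlinarith [hsum, hcost, hδnn]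
  -- measure decrease
  have hsuppsub : (F ×ˢ S).filter (fun p => w₁ p.1 p.2 ≠ 0)
      ⊆ (F ×ˢ S).filter (fun p => w p.1 p.2 ≠ 0) := by
    intro p hp
    rcases Finset.mem_filter.mp hp with ⟨hpFS, hp1⟩
    exact Finset.mem_filter.mpr ⟨hpFS, hsupp p.1 p.2 hp1⟩
  have hnmsub : F.filter (fun i => 0 < ∑ s ∈ S, w₁ i s ∧ ∑ s ∈ S, w₁ i s < u)
      ⊆ F.filter (fun i => 0 < ∑ s ∈ S, w i s ∧ ∑ s ∈ S, w i s < u) := by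
    intro i hi
    rcases Finset.mem_filter.mp hi with ⟨hiF, hp1, hp2⟩
    refine Finset.mem_filter.mpr ⟨hiF, ?_, ?_⟩
    · by_cases hi0 : i = ρ 0
      · subst hi0
        omega
      · by_cases hiN : i = ρ N
        · subst hiN
          have hN1 : N - 1 < N := by omega
          have he : N - 1 + 1 = N := by omega
          have hterm := (hedge (N-1) hN1).2.2
          rw [he] at hterm
          have : w (ρ N) (σ (N-1)) ≤ ∑ s ∈ S, w (ρ N) s :=
            Finset.single_le_sum (fun _ _ => Nat.zero_le _) (hσS (N-1) hN1)
          omega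
        · rw [← hrseq i hi0 hiN]
          exact hp1
    · by_cases hi0 : i = ρ 0
      · subst hi0
        exact hnf0
      · by_cases hiN : i = ρ N
        · subst hiN
          exact hnfN
        · rw [← hrseq i hi0 hiN]
          exact hp2
  refine ⟨w₁, hsupp, hrow₁, hcol₁, hcost₁, ?_⟩
  rcases le_or_gt A B with hAB | hAB
  · -- δ = A : an edge dies
    have hδeq : δ = A := min_eq_left hAB
    have hcell : w₁ (ρ jm) (σ jm) = 0 := by
      have hmcjm : mc (ρ jm) (σ jm) = 1 := by
        have h1 : 1 ≤ mc (ρ jm) (σ jm) :=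
          Finset.card_pos.mpr ⟨jm, Finset.mem_filter.mpr ⟨hjm, rfl, rfl⟩⟩
        have := hmc1 (ρ jm) (σ jm)
        omega
      have hpcjm : pc (ρ jm) (σ jm) = 0 := hdisj _ _ (by omega)
      have := L4 (ρ jm) (σ jm)
      rw [hmcjm, hpcjm] at this
      have hwA : w (ρ jm) (σ jm) = A := rfl
      omega
    have hmem : (ρ jm, σ jm) ∈ (F ×ˢ S).filter (fun p => w p.1 p.2 ≠ 0) := by
      refine Finset.mem_filter.mpr ⟨?_, ?_⟩
      · exact Finset.mem_product.mpr ⟨hρF jm (le_of_lt hjmN), hσS jm hjmN⟩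
      · exact (hedge jm hjmN).2.1
    have hnmem : (ρ jm, σ jm) ∉ (F ×ˢ S).filter (fun p => w₁ p.1 p.2 ≠ 0) := by
      intro hmem'
      rcases Finset.mem_filter.mp hmem' with ⟨_, h⟩
      exact h hcell
    have hstrict : ((F ×ˢ S).filter (fun p => w₁ p.1 p.2 ≠ 0)).card
        < ((F ×ˢ S).filter (fun p => w p.1 p.2 ≠ 0)).card := by
      refine Finset.card_lt_card ?_
      rw [Finset.ssubset_iff_of_subset hsuppsub]
      exact ⟨(ρ jm, σ jm), hmem, hnmem⟩
    have := Finset.card_le_card hnmsub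
    omega
  · -- δ = B : row ρ N becomes full
    have hδeq : δ = B := min_eq_right (le_of_lt hAB)
    have hfull : ∑ s ∈ S, w₁ (ρ N) s = u := by
      rw [hrsN, hδeq, hB]
      omega
    have hmem : ρ N ∈ F.filter (fun i => 0 < ∑ s ∈ S, w i s ∧ ∑ s ∈ S, w i s < u) := by
      refine Finset.mem_filter.mpr ⟨hρF N (le_refl N), ?_, hnfN⟩
      have hN1 : N - 1 < N := by omega
      have he : N - 1 + 1 = N := by omega
      have hterm := (hedge (N-1) hN1).2.2
      rw [he] at hterm
      have : w (ρ N) (σ (N-1)) ≤ ∑ s ∈ S, w (ρ N) s :=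
        Finset.single_le_sum (fun _ _ => Nat.zero_le _) (hσS (N-1) hN1)
      omega
    have hnmem : ρ N ∉ F.filter (fun i => 0 < ∑ s ∈ S, w₁ i s ∧ ∑ s ∈ S, w₁ i s < u) := by
      intro hmem'
      rcases Finset.mem_filter.mp hmem' with ⟨_, _, h⟩
      omega
    have hstrict : (F.filter (fun i => 0 < ∑ s ∈ S, w₁ i s ∧ ∑ s ∈ S, w₁ i s < u)).card
        < (F.filter (fun i => 0 < ∑ s ∈ S, w i s ∧ ∑ s ∈ S, w i s < u)).card := by
      refine Finset.card_lt_card ?_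
      rw [Finset.ssubset_iff_of_subset hnmsub]
      exact ⟨ρ N, hmem, hnmem⟩
    have := Finset.card_le_card hsuppsub
    omega

lemma main_aux [PseudoMetricSpace X] (F S : Finset X) (u : ℕ) (hu : 0 < u)
    (t : X → ℕ) (ht : ∀ s ∈ S, t s ≤ u) :
    ∀ n (w : X → X → ℕ),
      (∀ i s, w i s ≠ 0 → i ∈ F ∧ s ∈ S) →
      (∀ i ∈ F, ∑ s ∈ S, w i s ≤ u) →
      (∀ s ∈ S, ∑ i ∈ F, w i s = t s) →
      ((F ×ˢ S).filter (fun p => w p.1 p.2 ≠ 0)).card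
        + (F.filter (fun i => 0 < ∑ s ∈ S, w i s ∧ ∑ s ∈ S, w i s < u)).card ≤ n →
      ∃ w' : X → X → ℕ,
        (∀ i ∈ F, ∑ s ∈ S, w' i s ≤ u) ∧
        (∀ s ∈ S, ∑ i ∈ F, w' i s = t s) ∧
        (∑ i ∈ F, ∑ s ∈ S, (w' i s : ℝ) * dist i s
          ≤ ∑ i ∈ F, ∑ s ∈ S, (w i s : ℝ) * dist i s) ∧
        (F.filter (fun i => 0 < ∑ s ∈ S, w' i s)).card ≤ S.card := by
  intro n
  induction n with
  | zero =>
    intro w hnorm hrow hcol hmeas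
    refine ⟨w, hrow, hcol, le_refl _, ?_⟩
    by_contra hle
    push_neg at hle
    have hpos : 0 < (F.filter (fun i => 0 < ∑ s ∈ S, w i s)).card := by omega
    obtain ⟨i, hi⟩ := Finset.card_pos.mp hpos
    rcases Finset.mem_filter.mp hi with ⟨hiF, hip⟩
    obtain ⟨s, hs, hws⟩ := Finset.exists_ne_zero_of_sum_ne_zero (by omega :
      (∑ s ∈ S, w i s) ≠ 0)
    have : (i, s) ∈ (F ×ˢ S).filter (fun p => w p.1 p.2 ≠ 0) :=
      Finset.mem_filter.mpr ⟨Finset.mem_product.mpr ⟨hiF, hs⟩, hws⟩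
    have := Finset.card_pos.mpr ⟨(i, s), this⟩
    omega
  | succ n ih =>
    intro w hnorm hrow hcol hmeas
    classical
    by_cases hle : (F.filter (fun i => 0 < ∑ s ∈ S, w i s)).card ≤ S.card
    · exact ⟨w, hrow, hcol, le_refl _, hle⟩
    · set M := F.filter (fun i => 0 < ∑ s ∈ S, w i s) with hM
      have hmatch : ∀ i ∈ M, ∃ s ∈ S, w i s ≠ 0 := by
        intro i hi
        rcases Finset.mem_filter.mp hi with ⟨hiF, hip⟩
        exact Finset.exists_ne_zero_of_sum_ne_zero (by omega)
      have hrowM : ∀ i ∈ M, ∑ s ∈ S, w i s ≤ u := fun i hi =>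
        hrow i (Finset.mem_filter.mp hi).1
      have hcolM : ∀ s ∈ S, ∑ i ∈ M, w i s ≤ u := by
        intro s hs
        calc ∑ i ∈ M, w i s ≤ ∑ i ∈ F, w i s :=
              Finset.sum_le_sum_of_subset (Finset.filter_subset _ _)
          _ = t s := hcol s hs
          _ ≤ u := ht s hs
      have hstab : ¬ (∀ i ∈ M, ∀ i' ∈ M, i ≠ i' → (∑ s ∈ S, w i s < u) →
          (∑ s ∈ S, w i' s < u) → ¬ Relation.ReflTransGen (stepR S w) i i') := by
        intro hs
        exact hle (count u hu M.card M S w (le_refl _) hmatch hrowM hcolM hs)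
      push_neg at hstab
      obtain ⟨i, hiM, i', hi'M, hne, hnf, hnf', hconn⟩ := hstab
      obtain ⟨N, ρ, σ, hNpos, hρ0, hρN, hrinj, hcinj, hedge⟩ := exists_path S w hne hconn
      have hnf0 : ∑ s ∈ S, w (ρ 0) s < u := by rw [hρ0]; exact hnf
      have hnfN : ∑ s ∈ S, w (ρ N) s < u := by rw [hρN]; exact hnf'
      have hmove : ∃ w₁ : X → X → ℕ,
          (∀ i s, w₁ i s ≠ 0 → w i s ≠ 0) ∧
          (∀ i ∈ F, ∑ s ∈ S, w₁ i s ≤ u) ∧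
          (∀ s ∈ S, ∑ i ∈ F, w₁ i s = ∑ i ∈ F, w i s) ∧
          (∑ i ∈ F, ∑ s ∈ S, (w₁ i s : ℝ) * dist i s
            ≤ ∑ i ∈ F, ∑ s ∈ S, (w i s : ℝ) * dist i s) ∧
          ((F ×ˢ S).filter (fun p => w₁ p.1 p.2 ≠ 0)).card
            + (F.filter (fun i => 0 < ∑ s ∈ S, w₁ i s ∧ ∑ s ∈ S, w₁ i s < u)).card
          < ((F ×ˢ S).filter (fun p => w p.1 p.2 ≠ 0)).card
            + (F.filter (fun i => 0 < ∑ s ∈ S, w i s ∧ ∑ s ∈ S, w i s < u)).card := by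
        rcases le_or_gt (∑ j ∈ Finset.range N, dist (ρ (j+1)) (σ j))
            (∑ j ∈ Finset.range N, dist (ρ j) (σ j)) with hc | hc
        · exact move F S u w hnorm hrow N ρ σ hNpos hrinj hcinj hedge hnf0 hnfN hc
        · -- reversed path
          refine move F S u w hnorm hrow N (fun j => ρ (N - j)) (fun j => σ (N - 1 - j))
            hNpos ?_ ?_ ?_ ?_ ?_ ?_
          · intro a ha b hb hab
            have := hrinj (N - a) (by omega) (N - b) (by omega) hab
            omega
          · intro a ha b hb hab
            have := hcinj (N - 1 - a) (by omega) (N - 1 - b) (by omega) hab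
            omega
          · intro j hj
            show σ (N - 1 - j) ∈ S ∧ w (ρ (N - j)) (σ (N - 1 - j)) ≠ 0 ∧
              w (ρ (N - (j + 1))) (σ (N - 1 - j)) ≠ 0
            have e1 : N - j = (N - 1 - j) + 1 := by omega
            rw [e1]
            refine ⟨(hedge (N - 1 - j) (by omega)).1,
              (hedge (N - 1 - j) (by omega)).2.2, ?_⟩
            have e2 : N - (j + 1) = N - 1 - j := by omega
            rw [e2]
            exact (hedge (N - 1 - j) (by omega)).2.1
          · simpa using hnfN
          · simpa using hnf0
          · have h1 : ∑ j ∈ Finset.range N, dist (ρ (N - (j + 1))) (σ (N - 1 - j))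
                = ∑ j ∈ Finset.range N, dist (ρ j) (σ j) := by
              rw [← Finset.sum_range_reflect (fun k => dist (ρ k) (σ k)) N]
              refine Finset.sum_congr rfl fun j hj => ?_
              have e : N - (j + 1) = N - 1 - j := by omega
              rw [e]
            have h2 : ∑ j ∈ Finset.range N, dist (ρ (N - j)) (σ (N - 1 - j))
                = ∑ j ∈ Finset.range N, dist (ρ (j + 1)) (σ j) := by
              rw [← Finset.sum_range_reflect (fun k => dist (ρ (k + 1)) (σ k)) N]
              refine Finset.sum_congr rfl fun j hj => ?_
              have hjN : j < N := Finset.mem_range.mp hj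
              have e : N - j = (N - 1 - j) + 1 := by omega
              rw [e]
            calc ∑ j ∈ Finset.range N, dist (ρ (N - (j+1))) (σ (N - 1 - j))
                = ∑ j ∈ Finset.range N, dist (ρ j) (σ j) := h1
              _ ≤ ∑ j ∈ Finset.range N, dist (ρ (j+1)) (σ j) := le_of_lt hc
              _ = ∑ j ∈ Finset.range N, dist (ρ (N - j)) (σ (N - 1 - j)) := h2.symm
      obtain ⟨w₁, hs₁, hrow₁, hcol₁, hcost₁, hmeas₁⟩ := hmove
      have hnorm₁ : ∀ i s, w₁ i s ≠ 0 → i ∈ F ∧ s ∈ S := fun i s h =>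
        hnorm i s (hs₁ i s h)
      have hcolt₁ : ∀ s ∈ S, ∑ i ∈ F, w₁ i s = t s := by
        intro s hs
        rw [hcol₁ s hs]
        exact hcol s hs
      obtain ⟨w', h1, h2, h3, h4⟩ := ih w₁ hnorm₁ hrow₁ hcolt₁ (by omega)
      exact ⟨w', h1, h2, le_trans h3 hcost₁, h4⟩

end Stmt2Aux

/-- **Matching-thinning lemma** (key step of Theorem 2). Given a capacitated integral
matching `w : F × S → ℤ≥0` in a metric space in which every `i ∈ F` is matched at most
`u` times and every `s ∈ S` is matched exactly `t s ≤ u` times, there is a matching `w'`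
with the same row/column constraints, no larger cost, in which at most `|S|` points
of `F` are matched. -/
theorem stmt2 (X : Type) [PseudoMetricSpace X] [DecidableEq X]
    (F S : Finset X) (u : ℕ) (hu : 0 < u)
    (t : X → ℕ) (ht : ∀ s ∈ S, t s ≤ u)
    (w : X → X → ℕ)
    (hrow : ∀ i ∈ F, ∑ s ∈ S, w i s ≤ u)
    (hcol : ∀ s ∈ S, ∑ i ∈ F, w i s = t s) :
    ∃ w' : X → X → ℕ,
      (∀ i ∈ F, ∑ s ∈ S, w' i s ≤ u) ∧
      (∀ s ∈ S, ∑ i ∈ F, w' i s = t s) ∧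
      (∑ i ∈ F, ∑ s ∈ S, (w' i s : ℝ) * dist i s ≤
        ∑ i ∈ F, ∑ s ∈ S, (w i s : ℝ) * dist i s) ∧
      (F.filter (fun i => 0 < ∑ s ∈ S, w' i s)).card ≤ S.card := by
  classical
  set w₀ : X → X → ℕ := fun i s => if i ∈ F ∧ s ∈ S then w i s else 0 with hw₀
  have hval : ∀ i ∈ F, ∀ s ∈ S, w₀ i s = w i s := by
    intro i hi s hs
    rw [hw₀]
    simp [hi, hs]
  have hnorm : ∀ i s, w₀ i s ≠ 0 → i ∈ F ∧ s ∈ S := by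
    intro i s h
    by_contra hc
    apply h
    rw [hw₀]
    simp only [if_neg hc]
  have hrow₀ : ∀ i ∈ F, ∑ s ∈ S, w₀ i s ≤ u := by
    intro i hi
    calc ∑ s ∈ S, w₀ i s = ∑ s ∈ S, w i s :=
          Finset.sum_congr rfl fun s hs => hval i hi s hs
      _ ≤ u := hrow i hi
  have hcol₀ : ∀ s ∈ S, ∑ i ∈ F, w₀ i s = t s := by
    intro s hs
    calc ∑ i ∈ F, w₀ i s = ∑ i ∈ F, w i s :=
          Finset.sum_congr rfl fun i hi => hval i hi s hs
      _ = t s := hcol s hs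
  obtain ⟨w', h1, h2, h3, h4⟩ := Stmt2Aux.main_aux F S u hu t ht
    (((F ×ˢ S).filter (fun p => w₀ p.1 p.2 ≠ 0)).card
      + (F.filter (fun i => 0 < ∑ s ∈ S, w₀ i s ∧ ∑ s ∈ S, w₀ i s < u)).card)
    w₀ hnorm hrow₀ hcol₀ (le_refl _)
  refine ⟨w', h1, h2, ?_, h4⟩
  calc ∑ i ∈ F, ∑ s ∈ S, (w' i s : ℝ) * dist i s
      ≤ ∑ i ∈ F, ∑ s ∈ S, (w₀ i s : ℝ) * dist i s := h3
    _ = ∑ i ∈ F, ∑ s ∈ S, (w i s : ℝ) * dist i s := by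
      refine Finset.sum_congr rfl fun i hi => Finset.sum_congr rfl fun s hs => ?_
      rw [hval i hi s hs]
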